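/- Let L ∈ ℝ^{n×n} have n distinct eigenvalues λ_1 > λ_2 > … > λ_n > 0, so L is diagonalizable; let v_1,…,v_n be corresponding eigenvectors (L v_i = λ_i v_i) and let β_0 ∈ ℝ^n with β_0 ≥ 0 componentwise, written β_0 = Σ_{i=1}^n γ_i v_i. Set ρ_i := γ_i v_i ∈ ℝ^n and μ_i := −ln(λ_i/λ_1) for i = 1,…,n (so 0 = μ_1 < μ_2 < … < μ_n), and assume ρ_1 ≥ 0 componentwise. If for every component index ℓ ∈ {1,…,n}, the scalars z_i := (ρ_i)_ℓ satisfy z_1 ≥ 0, z_1 + … + z_n ≥ 0, and one of the following: (i) z_2,…,z_n ≥ 0; or (ii) z_2,…,z_n ≤ 0; or (iii) there exists j ∈ {2,…,n} such that z_1 ≥ −Σ_{i=2, i≠j}^{n} (1 − μ_i/μ_j) z_i e^{−μ_i s} for all s ∈ ℝ_+; then the solution β_t := L^t β_0 of β_{t+1} = L β_t is componentwise non-negative for every t ∈ ℕ. -/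

import Mathlib

open Matrix

/-- Non-negativity of the solution `β_t = Lᵗ β₀` of `β_{t+1} = L β_t` when
`L` has `n` distinct positive eigenvalues `λ₁ > ⋯ > λₙ > 0` with eigenvectors
`v₁, …, vₙ`, `β₀ = ∑ γᵢ vᵢ ≥ 0`, `ρᵢ := γᵢ vᵢ`, `μᵢ := -ln(λᵢ/λ₁)`, `ρ₁ ≥ 0`, and for
every component `ℓ` the scalars `zᵢ := (ρᵢ)_ℓ` satisfy one of the sufficient conditions
for non-negativity of the exponential sum `z₁ + ∑_{i≥2} zᵢ e^{-μᵢ s}`. -/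
theorem nonneg_solution_of_modal_conditions
    (n : ℕ) (hn : 1 ≤ n)
    (L : Matrix (Fin n) (Fin n) ℝ)
    (lam : ℕ → ℝ) (v : ℕ → Fin n → ℝ) (γ : ℕ → ℝ)
    (hlampos : ∀ i, 1 ≤ i → i ≤ n → 0 < lam i)
    (hlammono : ∀ i j, 1 ≤ i → i < j → j ≤ n → lam j < lam i)
    (hv0 : ∀ i, 1 ≤ i → i ≤ n → v i ≠ 0)
    (hev : ∀ i, 1 ≤ i → i ≤ n → L.mulVec (v i) = lam i • v i)
    (β0 : Fin n → ℝ)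
    (hβ0 : β0 = ∑ i ∈ Finset.Icc 1 n, γ i • v i)
    (hβ0nn : ∀ ℓ, 0 ≤ β0 ℓ)
    (ρ : ℕ → Fin n → ℝ) (hρ : ∀ i, ρ i = γ i • v i)
    (μ : ℕ → ℝ) (hμ : ∀ i, μ i = -Real.log (lam i / lam 1))
    (hρ1 : ∀ ℓ, 0 ≤ ρ 1 ℓ)
    (hcond : ∀ ℓ : Fin n,
      0 ≤ ρ 1 ℓ ∧
      0 ≤ ∑ i ∈ Finset.Icc 1 n, ρ i ℓ ∧
      ((∀ i, 2 ≤ i → i ≤ n → 0 ≤ ρ i ℓ) ∨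
       (∀ i, 2 ≤ i → i ≤ n → ρ i ℓ ≤ 0) ∨
       (∃ j, 2 ≤ j ∧ j ≤ n ∧ ∀ s : ℝ, 0 ≤ s →
         -(∑ i ∈ (Finset.Icc 2 n).erase j,
             (1 - μ i / μ j) * (ρ i ℓ * Real.exp (-μ i * s))) ≤ ρ 1 ℓ))) :
    ∀ t : ℕ, ∀ ℓ : Fin n, 0 ≤ (L ^ t).mulVec β0 ℓ := by
  have hlam1 : 0 < lam 1 := hlampos 1 le_rfl hn
  have hμ1 : μ 1 = 0 := by
    rw [hμ, div_self (ne_of_gt hlam1), Real.log_one, neg_zero]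
  have hexpμ : ∀ i, 1 ≤ i → i ≤ n → Real.exp (-μ i) = lam i / lam 1 := by
    intro i h1 h2
    rw [hμ, neg_neg, Real.exp_log (div_pos (hlampos i h1 h2) hlam1)]
  have hlamle : ∀ i, 1 ≤ i → i ≤ n → lam i ≤ lam 1 := by
    intro i h1 h2
    rcases eq_or_lt_of_le h1 with h | h
    · rw [← h]
    · exact le_of_lt (hlammono 1 i le_rfl h h2)
  have hμnn : ∀ i, 1 ≤ i → i ≤ n → 0 ≤ μ i := by
    intro i h1 h2
    rw [hμ, neg_nonneg]
    exact Real.log_nonpos (le_of_lt (div_pos (hlampos i h1 h2) hlam1))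
      ((div_le_one hlam1).2 (hlamle i h1 h2))
  have hμpos : ∀ j, 2 ≤ j → j ≤ n → 0 < μ j := by
    intro j h2 hjn
    rw [hμ, neg_pos]
    exact Real.log_neg (div_pos (hlampos j (le_trans one_le_two h2) hjn) hlam1)
      ((div_lt_one hlam1).2 (hlammono 1 j le_rfl (by omega) hjn))
  -- key analytic lemma
  have key : ∀ ℓ : Fin n, ∀ s : ℝ, 0 ≤ s →
      0 ≤ ∑ i ∈ Finset.Icc 1 n, ρ i ℓ * Real.exp (-μ i * s) := by
    intro ℓ s hs
    obtain ⟨h1, h2, hc⟩ := hcond ℓ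
    rcases hc with hc | hc | ⟨j, hj2, hjn, hc⟩
    · -- case (i)
      apply Finset.sum_nonneg
      intro i hi
      rw [Finset.mem_Icc] at hi
      have hz : 0 ≤ ρ i ℓ := by
        rcases eq_or_lt_of_le hi.1 with h | h
        · rw [← h]; exact h1
        · exact hc i (by omega) hi.2
      positivity
    · -- case (ii)
      refine le_trans h2 (Finset.sum_le_sum ?_)
      intro i hi
      rw [Finset.mem_Icc] at hi
      rcases eq_or_lt_of_le hi.1 with h | h
      · rw [← h, hμ1]; simp
      · have hz : ρ i ℓ ≤ 0 := hc i (by omega) hi.2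
        have hexple : Real.exp (-μ i * s) ≤ 1 := by
          apply Real.exp_le_one_iff.2
          have := hμnn i hi.1 hi.2
          nlinarith
        nlinarith
    · -- case (iii)
      have hμj : 0 < μ j := hμpos j hj2 hjn
      set g : ℝ → ℝ := fun u => ∑ i ∈ Finset.Icc 1 n, ρ i ℓ * Real.exp ((μ j - μ i) * u)
        with hg
      have hder : ∀ u : ℝ, HasDerivAt g
          (∑ i ∈ Finset.Icc 1 n, ρ i ℓ * ((μ j - μ i) * Real.exp ((μ j - μ i) * u))) u := by
        intro u
        apply HasDerivAt.fun_sum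
        intro i _
        have h1' : HasDerivAt (fun u : ℝ => (μ j - μ i) * u) (μ j - μ i) u := by
          simpa using (hasDerivAt_id u).const_mul (μ j - μ i)
        have := h1'.exp.const_mul (ρ i ℓ)
        convert this using 1
        rfl
        ring
      have hsplit : Finset.Icc 1 n = insert 1 (Finset.Icc 2 n) := by
        ext x
        simp only [Finset.mem_Icc, Finset.mem_insert]
        omega
      have h1notin : (1 : ℕ) ∉ Finset.Icc 2 n := by simp
      have hjmem : j ∈ Finset.Icc 2 n := Finset.mem_Icc.2 ⟨hj2, hjn⟩
      -- derivative nonneg on [0, ∞)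
      have hderiv_nonneg : ∀ u : ℝ, 0 ≤ u → 0 ≤
          ∑ i ∈ Finset.Icc 1 n, ρ i ℓ * ((μ j - μ i) * Real.exp ((μ j - μ i) * u)) := by
        intro u hu
        rw [hsplit, Finset.sum_insert h1notin,
          ← Finset.add_sum_erase _ _ hjmem]
        have hterm1 : ρ 1 ℓ * ((μ j - μ 1) * Real.exp ((μ j - μ 1) * u))
            = μ j * Real.exp (μ j * u) * ρ 1 ℓ := by
          rw [hμ1]; ring
        have htermj : ρ j ℓ * ((μ j - μ j) * Real.exp ((μ j - μ j) * u)) = 0 := by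
          simp
        have hterms : ∀ i ∈ (Finset.Icc 2 n).erase j,
            ρ i ℓ * ((μ j - μ i) * Real.exp ((μ j - μ i) * u))
            = μ j * Real.exp (μ j * u) *
              ((1 - μ i / μ j) * (ρ i ℓ * Real.exp (-μ i * u))) := by
          intro i _
          have : Real.exp ((μ j - μ i) * u) = Real.exp (μ j * u) * Real.exp (-μ i * u) := by
            rw [← Real.exp_add]; ring_nf
          rw [this]
          field_simp
        rw [hterm1, htermj, Finset.sum_congr rfl hterms, ← Finset.mul_sum]
        have hcs := hc u hu
        have hE : 0 < μ j * Real.exp (μ j * u) := by positivity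
        nlinarith [mul_le_mul_of_nonneg_left (neg_le_iff_add_nonneg.1 hcs) (le_of_lt hE)]
      -- g is monotone on [0, ∞)
      have hmono : MonotoneOn g (Set.Ici (0 : ℝ)) := by
        apply monotoneOn_of_deriv_nonneg (convex_Ici 0)
        · exact Continuous.continuousOn (by
            apply continuous_finset_sum
            intro i _
            fun_prop)
        · intro u _
          exact (hder u).differentiableAt.differentiableWithinAt
        · intro u hu
          rw [interior_Ici] at hu
          rw [(hder u).deriv]
          exact hderiv_nonneg u (le_of_lt hu)
      have hg0 : (0 : ℝ) ≤ g 0 := by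
        rw [hg]
        simpa using h2
      have hgs : 0 ≤ g s := le_trans hg0 (hmono Set.self_mem_Ici hs hs)
      have hrw : ∑ i ∈ Finset.Icc 1 n, ρ i ℓ * Real.exp (-μ i * s)
          = Real.exp (-μ j * s) * g s := by
        rw [hg, Finset.mul_sum]
        apply Finset.sum_congr rfl
        intro i _
        rw [← mul_assoc, mul_comm (Real.exp (-μ j * s)) (ρ i ℓ), mul_assoc,
          ← Real.exp_add]
        ring_nf
      rw [hrw]
      positivity
  -- closed form for the iterates
  have hiter : ∀ t : ℕ, (L ^ t).mulVec β0 = ∑ i ∈ Finset.Icc 1 n, lam i ^ t • ρ i := by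
    intro t
    induction t with
    | zero =>
      simp only [pow_zero, Matrix.one_mulVec, hβ0]
      exact Finset.sum_congr rfl fun i _ => by rw [hρ i, one_smul]
    | succ t ih =>
      rw [pow_succ', ← Matrix.mulVec_mulVec, ih]
      have : L.mulVec (∑ i ∈ Finset.Icc 1 n, lam i ^ t • ρ i)
          = ∑ i ∈ Finset.Icc 1 n, lam i ^ t • L.mulVec (ρ i) := by
        rw [← L.mulVecLin_apply, map_sum]
        exact Finset.sum_congr rfl fun i _ => by
          rw [_root_.map_smul, L.mulVecLin_apply]
      rw [this]
      apply Finset.sum_congr rfl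
      intro i hi
      rw [Finset.mem_Icc] at hi
      simp only [hρ i, Matrix.mulVec_smul, hev i hi.1 hi.2, smul_smul, pow_succ]
      ring_nf
  intro t ℓ
  rw [hiter t]
  have happ : (∑ i ∈ Finset.Icc 1 n, lam i ^ t • ρ i) ℓ
      = ∑ i ∈ Finset.Icc 1 n, lam i ^ t * ρ i ℓ := by
    rw [Finset.sum_apply]
    exact Finset.sum_congr rfl fun i _ => rfl
  rw [happ]
  have hlamexp : ∀ i, 1 ≤ i → i ≤ n →
      lam i ^ t = lam 1 ^ t * Real.exp (-μ i * (t : ℝ)) := by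
    intro i h1 h2
    have : Real.exp (-μ i * (t : ℝ)) = (lam i / lam 1) ^ t := by
      rw [mul_comm, Real.exp_nat_mul, hexpμ i h1 h2]
    rw [this, ← mul_pow, mul_div_cancel₀ _ (ne_of_gt hlam1)]
  have hsum : ∑ i ∈ Finset.Icc 1 n, lam i ^ t * ρ i ℓ
      = lam 1 ^ t * ∑ i ∈ Finset.Icc 1 n, ρ i ℓ * Real.exp (-μ i * (t : ℝ)) := by
    rw [Finset.mul_sum]
    apply Finset.sum_congr rfl
    intro i hi
    rw [Finset.mem_Icc] at hi
    rw [hlamexp i hi.1 hi.2]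
    ring
  rw [hsum]
  have := key ℓ (t : ℝ) (Nat.cast_nonneg t)
  positivity
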